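/- Let d, n ≥ 1, let 𝕋^d be the product of d copies of the additive circle ℝ/2πℤ (a compact abelian group), and let f : 𝕋^d → ℝ^n be continuous with ∫_{𝕋^d} f dμ = 0, where μ is the Haar measure on 𝕋^d. For θ ∈ 𝕋^d define the translate f_θ : 𝕋^d → ℝ^n by f_θ(x) = f(x + θ). Then, in the Banach space C(𝕋^d, ℝ^n) of continuous maps with the supremum norm, the closure of the convex cone generated by {f_θ : θ ∈ 𝕋^d} (i.e. of the set of all finite sums Σ αᵢ f_{θᵢ} with αᵢ ≥ 0) equals the closure of the linear span of {f_θ : θ ∈ 𝕋^d}. -/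

import Mathlib

open Set Real MeasureTheory ContinuousMap

noncomputable section

instance : Fact (0 < 2 * Real.pi) := ⟨by positivity⟩

/-- The `d`-dimensional torus `𝕋^d = (ℝ/2πℤ)^d`. -/
abbrev Torus (d : ℕ) := Fin d → AddCircle (2 * Real.pi)

/-- Translation by `θ` as a continuous self-map of the torus. -/
def translation (d : ℕ) (θ : Torus d) : C(Torus d, Torus d) :=
  ⟨fun x => x + θ, by continuity⟩

/-- For a continuous `f : 𝕋^d → ℝ^n` with zero mean, the closure (in the sup norm)
of the convex cone generated by the translates `f_θ` equals the closure of their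
linear span. -/
theorem stmt_2 (d n : ℕ) (hd : 1 ≤ d) (hn : 1 ≤ n)
    (f : C(Torus d, EuclideanSpace ℝ (Fin n)))
    (hf : ∫ x : Torus d, f x = 0) :
    closure {g : C(Torus d, EuclideanSpace ℝ (Fin n)) |
        ∃ (N : ℕ) (α : Fin N → ℝ) (θ : Fin N → Torus d),
          (∀ i, 0 ≤ α i) ∧ g = ∑ i, α i • f.comp (translation d (θ i))} =
    closure (Submodule.span ℝ
        {g : C(Torus d, EuclideanSpace ℝ (Fin n)) |
          ∃ θ : Torus d, g = f.comp (translation d θ)} :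
      Set C(Torus d, EuclideanSpace ℝ (Fin n))) := by
  set E := EuclideanSpace ℝ (Fin n)
  set Φ : Torus d → C(Torus d, E) := fun θ => f.comp (translation d θ) with hΦdef
  set S : Set C(Torus d, E) :=
    {g | ∃ (N : ℕ) (α : Fin N → ℝ) (θ : Fin N → Torus d),
      (∀ i, 0 ≤ α i) ∧ g = ∑ i, α i • Φ (θ i)} with hSdef
  set V : Submodule ℝ C(Torus d, E) :=
    Submodule.span ℝ {g : C(Torus d, E) | ∃ θ : Torus d, g = Φ θ} with hVdef
  -- continuity of θ ↦ f_θ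
  have hΦcont : Continuous Φ := by
    apply ContinuousMap.continuous_of_continuous_uncurry
    exact f.continuous.comp (continuous_snd.add continuous_fst)
  have hΦint : Integrable Φ (volume : Measure (Torus d)) :=
    hΦcont.integrable_of_hasCompactSupport (isClosed_tsupport Φ).isCompact
  -- the mean of the translates is zero
  have hΦ0 : (∫ θ : Torus d, Φ θ) = 0 := by
    refine ContinuousMap.ext fun x => ?_
    rw [ContinuousMap.integral_apply hΦint x]
    show (∫ θ : Torus d, f (x + θ)) = 0
    calc (∫ θ : Torus d, f (x + θ)) = ∫ θ : Torus d, f θ :=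
          MeasureTheory.integral_add_left_eq_self (fun θ => f θ) x
      _ = 0 := hf
  -- basic cone properties
  have hS0 : (0 : C(Torus d, E)) ∈ S :=
    ⟨0, Fin.elim0, Fin.elim0, fun i => i.elim0, by simp⟩
  have hSθ : ∀ (c : ℝ), 0 ≤ c → ∀ θ : Torus d, c • Φ θ ∈ S := by
    intro c hc θ
    exact ⟨1, fun _ => c, fun _ => θ, fun _ => hc, by simp⟩
  have hSadd : ∀ g₁ ∈ S, ∀ g₂ ∈ S, g₁ + g₂ ∈ S := by
    rintro g₁ ⟨N, α, θ, hα, rfl⟩ g₂ ⟨M, β, η, hβ, rfl⟩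
    refine ⟨N + M, Fin.append α β, Fin.append θ η, ?_, ?_⟩
    · intro i
      induction i using Fin.addCases with
      | left j => rw [Fin.append_left]; exact hα j
      | right j => rw [Fin.append_right]; exact hβ j
    · rw [Fin.sum_univ_add]
      simp [Fin.append_left, Fin.append_right]
  have hSsmul : ∀ (c : ℝ), 0 ≤ c → ∀ g ∈ S, c • g ∈ S := by
    rintro c hc g ⟨N, α, θ, hα, rfl⟩
    refine ⟨N, fun i => c * α i, θ, fun i => mul_nonneg hc (hα i), ?_⟩
    rw [Finset.smul_sum]
    simp [smul_smul]
  have hconv : Convex ℝ S := by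
    intro x hx y hy a b ha hb _
    exact hSadd _ (hSsmul a ha x hx) _ (hSsmul b hb y hy)
  -- the cone sits inside the span
  have hSV : S ⊆ (V : Set C(Torus d, E)) := by
    rintro g ⟨N, α, θ, hα, rfl⟩
    exact Submodule.sum_mem _ fun i _ =>
      Submodule.smul_mem _ _ (Submodule.subset_span ⟨θ i, rfl⟩)
  -- the span sits inside the closure of the cone (separation argument)
  have hVS : (V : Set C(Torus d, E)) ⊆ closure S := by
    intro g hg
    by_contra hgS
    obtain ⟨Λ, u, hΛS, hΛg⟩ :=
      geometric_hahn_banach_closed_point (hconv.closure)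
        isClosed_closure hgS
    have hu : 0 < u := by simpa using hΛS 0 (subset_closure hS0)
    have hneg : ∀ θ : Torus d, Λ (Φ θ) ≤ 0 := by
      intro θ
      by_contra hpos
      push_neg at hpos
      have := hΛS _ (subset_closure (hSθ (u / Λ (Φ θ)) (le_of_lt (by positivity)) θ))
      rw [ContinuousLinearMap.map_smul, smul_eq_mul, div_mul_cancel₀ _ (ne_of_gt hpos)] at this
      exact lt_irrefl u this
    have hint : (∫ θ : Torus d, Λ (Φ θ)) = 0 := by
      rw [ContinuousLinearMap.integral_comp_comm Λ hΦint, hΦ0, map_zero]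
    have hcont : Continuous fun θ : Torus d => -Λ (Φ θ) :=
      (Λ.continuous.comp hΦcont).neg
    have hintneg :
        (∫ θ : Torus d, -Λ (Φ θ)) = 0 := by
      rw [MeasureTheory.integral_neg, hint, neg_zero]
    have hintegrable : Integrable (fun θ : Torus d => -Λ (Φ θ)) volume :=
      hcont.integrable_of_hasCompactSupport (isClosed_tsupport _).isCompact
    have hae : (fun θ : Torus d => -Λ (Φ θ)) =ᶠ[ae volume] 0 :=
      (MeasureTheory.integral_eq_zero_iff_of_nonneg
        (fun θ => neg_nonneg.2 (hneg θ)) hintegrable).1 hintneg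
    have hzero : (fun θ : Torus d => -Λ (Φ θ)) = 0 :=
      (Continuous.ae_eq_iff_eq volume hcont continuous_const).1 hae
    have hΛΦ : ∀ θ : Torus d, Λ (Φ θ) = 0 := by
      intro θ
      have := congrFun hzero θ
      simpa [neg_eq_zero] using this
    have hker : V ≤ LinearMap.ker (ContinuousLinearMap.toLinearMap Λ) := by
      rw [hVdef]
      apply Submodule.span_le.2
      rintro g' ⟨θ, rfl⟩
      exact hΛΦ θ
    have : Λ g = 0 := hker hg
    rw [this] at hΛg
    exact lt_irrefl u (hΛg.trans hu)
  -- conclude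
  apply subset_antisymm
  · exact closure_mono hSV
  · exact closure_minimal hVS isClosed_closure
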